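/- There exist nonnegative reals p₁,…,p₆ summing to 1 such that 2√A + √(B+C) + √(B−C) ≤ 1 while (p₃+p₄)(p₅+p₆) < (p₁−p₂)², where A, B, C are as defined. Hence the realignment criterion is strictly weaker than the PPT criterion on Bell decomposable 2⊗3 states. -/

import Mathlib

/-- There is a Bell decomposable `2⊗3` state satisfying Rudolph's realignment
criterion `2√A + √(B+C) + √(B−C) ≤ 1` but violating the PPT inequality
`(p₃+p₄)(p₅+p₆) ≥ (p₁−p₂)²`: the realignment criterion is strictly weaker
than PPT on these states. -/
theorem realignment_weaker_than_ppt :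
    ∃ p : Fin 6 → ℝ, (∀ i, 0 ≤ p i) ∧ (∑ i, p i = 1) ∧
      (2 * Real.sqrt (((p 0 - p 1)^2 + (p 2 - p 3)^2 + (p 4 - p 5)^2) / 4)
        + Real.sqrt ((((p 0 + p 1)^2 + (p 2 + p 3)^2 + (p 4 + p 5)^2) / 4)
          + (((p 0 + p 1) * (p 2 + p 3) + (p 2 + p 3) * (p 4 + p 5)
            + (p 4 + p 5) * (p 0 + p 1)) / 4))
        + Real.sqrt ((((p 0 + p 1)^2 + (p 2 + p 3)^2 + (p 4 + p 5)^2) / 4)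
          - (((p 0 + p 1) * (p 2 + p 3) + (p 2 + p 3) * (p 4 + p 5)
            + (p 4 + p 5) * (p 0 + p 1)) / 4)) ≤ 1) ∧
      (p 2 + p 3) * (p 4 + p 5) < (p 0 - p 1)^2 := by
  refine ⟨![2/5, 0, 3/20, 3/20, 3/20, 3/20], ?_, ?_, ?_, ?_⟩
  · intro i
    fin_cases i <;> norm_num
  · have e5 : (![(2:ℝ)/5, 0, 3/20, 3/20, 3/20, 3/20]) 5 = 3/20 := rfl
    simp [Fin.sum_univ_six, e5]
    norm_num
  · have h1 : Real.sqrt (((2/5 - 0)^2 + (3/20 - 3/20)^2 + (3/20 - 3/20)^2 : ℝ) / 4)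
        = 1/5 := by
      rw [show (((2/5 - 0)^2 + (3/20 - 3/20)^2 + (3/20 - 3/20)^2 : ℝ) / 4) = (1/5)^2 by
        norm_num]
      exact Real.sqrt_sq (by norm_num)
    have h2 : Real.sqrt ((((2/5 + 0)^2 + (3/20 + 3/20)^2 + (3/20 + 3/20)^2 : ℝ) / 4)
        + (((2/5 + 0) * (3/20 + 3/20) + (3/20 + 3/20) * (3/20 + 3/20)
          + (3/20 + 3/20) * (2/5 + 0)) / 4)) ≤ 11/20 := by
      rw [show (11:ℝ)/20 = Real.sqrt ((11/20)^2) from (Real.sqrt_sq (by norm_num)).symm]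
      exact Real.sqrt_le_sqrt (by norm_num)
    have h3 : Real.sqrt ((((2/5 + 0)^2 + (3/20 + 3/20)^2 + (3/20 + 3/20)^2 : ℝ) / 4)
        - (((2/5 + 0) * (3/20 + 3/20) + (3/20 + 3/20) * (3/20 + 3/20)
          + (3/20 + 3/20) * (2/5 + 0)) / 4)) = 1/20 := by
      rw [show ((((2/5 + 0)^2 + (3/20 + 3/20)^2 + (3/20 + 3/20)^2 : ℝ) / 4)
        - (((2/5 + 0) * (3/20 + 3/20) + (3/20 + 3/20) * (3/20 + 3/20)
          + (3/20 + 3/20) * (2/5 + 0)) / 4)) = (1/20)^2 by norm_num]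
      exact Real.sqrt_sq (by norm_num)
    have e5 : (![(2:ℝ)/5, 0, 3/20, 3/20, 3/20, 3/20]) 5 = 3/20 := rfl
    simp only [Matrix.cons_val_zero, Matrix.cons_val_one, Matrix.head_cons,
      Matrix.cons_val_two, Matrix.tail_cons, Matrix.cons_val_three,
      Matrix.cons_val_four, Matrix.cons_val_succ, e5]
    rw [h1, h3]
    linarith [h2]
  · have e5 : (![(2:ℝ)/5, 0, 3/20, 3/20, 3/20, 3/20]) 5 = 3/20 := rfl
    simp only [e5, Matrix.cons_val_zero, Matrix.cons_val_one, Matrix.head_cons,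
      Matrix.cons_val_two, Matrix.tail_cons, Matrix.cons_val_three,
      Matrix.cons_val_four, Matrix.cons_val_succ]
    norm_num
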